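/- Let B be a unital complex *-algebra and S ⊆ B a subset such that the smallest star-subalgebra of B containing S ∪ {1} is B itself. Let φ : B → B be a unital algebra homomorphism satisfying φ(φ(b*)*) = b for all b ∈ B. Assume that for every b ∈ S there exists a function f : ℂ → B of finite exponential type with f(n·i) = φⁿ(b) for every natural number n. Then there exists a unique exponential one-parameter group β on B with β_i = φ. -/

import Mathlib

/-- A function `f : ℂ → ℂ` is of exponential type: it is entire and satisfies a bound
`|f z| ≤ M * exp (r * |Im z|)`. -/
def ExpType (f : ℂ → ℂ) : Prop :=
  Differentiable ℂ f ∧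
    ∃ M r : ℝ, 0 < M ∧ 0 < r ∧ ∀ z : ℂ, ‖f z‖ ≤ M * Real.exp (r * |z.im|)

/-- A function from `ℂ` into a complex vector space `V` is of finite exponential type if it is a
finite linear combination of functions of exponential type with coefficients in `V`. -/
def FinExpType {V : Type*} [AddCommGroup V] [Module ℂ V] (f : ℂ → V) : Prop :=
  ∃ (n : ℕ) (v : Fin n → V) (g : Fin n → ℂ → ℂ),
    (∀ j, ExpType (g j)) ∧ ∀ z : ℂ, f z = ∑ j, g j z • v j

/-- A one-parameter group on a unital complex *-algebra `B`: a family of algebra automorphisms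
`β z` with `β (y + z) = β y ∘ β z` and `star (β z b) = β (conj z) (star b)`. -/
def IsOneParamGroup {B : Type*} [Ring B] [Algebra ℂ B] [StarRing B] [StarModule ℂ B]
    (β : ℂ → (B ≃ₐ[ℂ] B)) : Prop :=
  (∀ y z : ℂ, ∀ b : B, β (y + z) b = β y (β z b)) ∧
    (∀ z : ℂ, ∀ b : B, star (β z b) = β (starRingEnd ℂ z) (star b))

/-- An exponential one-parameter group: a one-parameter group such that `z ↦ β z b` is of finite
exponential type for every `b`. -/
def IsExpOneParamGroup {B : Type*} [Ring B] [Algebra ℂ B] [StarRing B] [StarModule ℂ B]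
    (β : ℂ → (B ≃ₐ[ℂ] B)) : Prop :=
  IsOneParamGroup β ∧ ∀ b : B, FinExpType (fun z => β z b)


open Complex Filter
open scoped ComplexConjugate


lemma div_entire {f : ℂ → ℂ} (hf : Differentiable ℂ f) {a : ℂ} (ha : f a = 0) :
    ∃ g : ℂ → ℂ, Differentiable ℂ g ∧ ∀ z, f z = (z - a) * g z := by
  refine ⟨dslope f a, ?_, fun z => ?_⟩
  · have := (Complex.differentiableOn_dslope (c := a) (s := Set.univ) univ_mem).mpr
      hf.differentiableOn
    rwa [← differentiableOn_univ]
  · have := sub_smul_dslope f a z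
    rw [ha, sub_zero] at this
    rw [← this, smul_eq_mul]

lemma div_entire_iter {f : ℂ → ℂ} (hf : Differentiable ℂ f) :
    ∀ N : ℕ, (∀ n : ℕ, 1 ≤ n → n ≤ N → f n = 0) →
      ∃ g : ℂ → ℂ, Differentiable ℂ g ∧
        ∀ z, f z = (∏ n ∈ Finset.Icc 1 N, (z - (n : ℂ))) * g z := by
  intro N
  induction N with
  | zero => exact fun _ => ⟨f, hf, fun z => by simp⟩
  | succ N ih =>
    intro h
    obtain ⟨q, hq, hfq⟩ := ih (fun n h1 h2 => h n h1 (h2.trans (Nat.le_succ N)))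
    have hP : (∏ n ∈ Finset.Icc 1 N, (((N:ℂ)+1) - (n : ℂ))) ≠ 0 := by
      refine Finset.prod_ne_zero_iff.mpr fun n hn => sub_ne_zero.mpr ?_
      have hn' := (Finset.mem_Icc.mp hn).2
      have h2 : ((N+1 : ℕ) : ℂ) ≠ (n : ℂ) := by
        simp only [Ne, Nat.cast_inj]; omega
      intro hc; apply h2; rw [← hc]; push_cast; ring
    have hqz : q ((N:ℂ)+1) = 0 := by
      have := hfq ((N:ℂ)+1)
      have hfz : f ((N:ℂ)+1) = 0 := by
        have := h (N+1) (by omega) le_rfl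
        rwa [Nat.cast_add, Nat.cast_one] at this
      rw [hfz] at this
      exact (mul_eq_zero.mp this.symm).resolve_left hP
    obtain ⟨g, hg, hqg⟩ := div_entire hq hqz
    refine ⟨g, hg, fun z => ?_⟩
    rw [hfq z, hqg z, Finset.prod_Icc_succ_top (by omega)]
    push_cast
    ring

/-- numeric: `(2N+1) * ∏ (n - σ) ≤ ∏ (n + σ)` for `σ ∈ [1/2, 1)`. -/
lemma blaschke_prod_bound (σ : ℝ) (h1 : 1/2 ≤ σ) (h2 : σ < 1) :
    ∀ N : ℕ, (2*N+1 : ℝ) * ∏ n ∈ Finset.Icc 1 N, ((n:ℝ) - σ) ≤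
      ∏ n ∈ Finset.Icc 1 N, ((n:ℝ) + σ) := by
  intro N
  induction N with
  | zero => simp
  | succ N ih =>
    rw [Finset.prod_Icc_succ_top (by omega), Finset.prod_Icc_succ_top (by omega)]
    have hnn : (0:ℝ) ≤ ∏ n ∈ Finset.Icc 1 N, ((n:ℝ) - σ) := by
      refine Finset.prod_nonneg fun n hn => ?_
      have := (Finset.mem_Icc.mp hn).1
      have : (1:ℝ) ≤ (n:ℝ) := by exact_mod_cast this
      linarith
    have key : (2*(N+1)+1 : ℝ) * (((N+1:ℕ):ℝ) - σ) ≤ (2*N+1) * (((N+1:ℕ):ℝ) + σ) := by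
      push_cast; nlinarith
    calc (2*(N+1:ℕ)+1 : ℝ) * ((∏ n ∈ Finset.Icc 1 N, ((n:ℝ) - σ)) * (((N+1:ℕ):ℝ) - σ))
        = ((2*(N+1)+1 : ℝ) * (((N+1:ℕ):ℝ) - σ)) * ∏ n ∈ Finset.Icc 1 N, ((n:ℝ) - σ) := by
          push_cast; ring
      _ ≤ ((2*N+1) * (((N+1:ℕ):ℝ) + σ)) * ∏ n ∈ Finset.Icc 1 N, ((n:ℝ) - σ) := by
          exact mul_le_mul_of_nonneg_right key hnn
      _ = (((N+1:ℕ):ℝ) + σ) * ((2*N+1) * ∏ n ∈ Finset.Icc 1 N, ((n:ℝ) - σ)) := by ring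
      _ ≤ (((N+1:ℕ):ℝ) + σ) * ∏ n ∈ Finset.Icc 1 N, ((n:ℝ) + σ) := by
          refine mul_le_mul_of_nonneg_left ih ?_
          positivity
      _ = (∏ n ∈ Finset.Icc 1 N, ((n:ℝ) + σ)) * (((N+1:ℕ):ℝ) + σ) := by ring

theorem carlson {f : ℂ → ℂ} (hd : Differentiable ℂ f) {M r : ℝ} (hM : 0 < M) (hr : 0 < r)
    (hb : ∀ z, ‖f z‖ ≤ M * Real.exp (r * |z.im|))
    (h0 : ∀ n : ℕ, f (n * Complex.I) = 0) : ∀ w, f w = 0 := by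
  have hp_d : Differentiable ℂ (fun z => f (z * I) * Complex.exp (-(r:ℂ) * z)) :=
    (hd.comp (differentiable_id.mul_const I)).mul
      ((differentiable_id.const_mul _).cexp)
  set p : ℂ → ℂ := fun z => f (z * I) * Complex.exp (-(r:ℂ) * z) with hp_def
  have hp_val : ∀ z, p z = f (z * I) * Complex.exp (-(r:ℂ) * z) := fun _ => rfl
  have habs_exp : ∀ z : ℂ, ‖Complex.exp (-(r:ℂ) * z)‖ = Real.exp (-(r * z.re)) := by
    intro z
    rw [Complex.norm_exp]
    congr 1
    simp [Complex.mul_re]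
  have hp_bound : ∀ z : ℂ, 0 ≤ z.re → ‖p z‖ ≤ M := by
    intro z hz
    rw [hp_val, norm_mul, habs_exp]
    calc ‖f (z * I)‖ * Real.exp (-(r * z.re))
        ≤ (M * Real.exp (r * |(z * I).im|)) * Real.exp (-(r * z.re)) := by
          exact mul_le_mul_of_nonneg_right (hb _) (Real.exp_pos _).le
      _ = M * Real.exp (r * z.re) * Real.exp (-(r * z.re)) := by
          rw [Complex.mul_I_im, _root_.abs_of_nonneg hz]
      _ = M := by rw [mul_assoc, ← Real.exp_add]; simp
  have hp0 : ∀ n : ℕ, p n = 0 := by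
    intro n
    rw [hp_val, h0 n, zero_mul]
  -- the key quantitative estimate
  have hpσ : ∀ σ : ℝ, 1/2 ≤ σ → σ < 1 → p σ = 0 := by
    intro σ hσ1 hσ2
    have hσ0 : (0:ℝ) < σ := by linarith
    have hN : ∀ N : ℕ, (2*N+1 : ℝ) * ‖p σ‖ ≤ M := by
      intro N
      obtain ⟨q, hq, hpq⟩ := div_entire_iter hp_d N (fun n _ _ => hp0 n)
      have hQd : Differentiable ℂ (fun z : ℂ => ∏ n ∈ Finset.Icc 1 N, (z + (n:ℂ))) := by
        apply Differentiable.fun_finsetProd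
        intro i _
        exact differentiable_id.add_const _
      set G : ℂ → ℂ := fun z => q z * ∏ n ∈ Finset.Icc 1 N, (z + (n:ℂ)) with hG_def
      have hG_val : ∀ z, G z = q z * ∏ n ∈ Finset.Icc 1 N, (z + (n:ℂ)) := fun _ => rfl
      have hGd : Differentiable ℂ G := hq.mul hQd
      have hPabs : ∀ w : ℂ, ‖∏ n ∈ Finset.Icc 1 N, (w - (n:ℂ))‖
          = ∏ n ∈ Finset.Icc 1 N, ‖w - (n:ℂ)‖ := fun w =>
        norm_prod _ _
      have hQabs : ∀ w : ℂ, ‖∏ n ∈ Finset.Icc 1 N, (w + (n:ℂ))‖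
          = ∏ n ∈ Finset.Icc 1 N, ‖w + (n:ℂ)‖ := fun w =>
        norm_prod _ _
      have key : ∀ w : ℂ, ‖G w‖ * ∏ n ∈ Finset.Icc 1 N, ‖w - (n:ℂ)‖
          = ‖p w‖ * ∏ n ∈ Finset.Icc 1 N, ‖w + (n:ℂ)‖ := by
        intro w
        rw [← hPabs, ← hQabs, ← norm_mul, ← norm_mul]
        congr 1
        rw [hG_val, hpq w]
        ring
      have hnabs : ∀ n : ℕ, ‖(n:ℂ)‖ = (n:ℝ) := by
        intro n
        rw [show ((n:ℂ)) = (((n:ℝ)):ℂ) by norm_cast, Complex.norm_real, Real.norm_eq_abs,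
          _root_.abs_of_nonneg (Nat.cast_nonneg n)]
      -- boundary bound on the imaginary axis
      have him : ∀ y : ℝ, ‖G ((y:ℂ) * I)‖ ≤ M := by
        intro y
        have hPQ : ∀ n : ℕ, ‖(y:ℂ)*I - (n:ℂ)‖ = ‖(y:ℂ)*I + (n:ℂ)‖ := by
          intro n
          have hc : (y:ℂ)*I + (n:ℂ) = -(conj ((y:ℂ)*I - (n:ℂ))) := by
            simp [map_sub, Complex.conj_I]
            ring
          rw [hc, norm_neg, Complex.norm_conj]
        have hPne : (∏ n ∈ Finset.Icc 1 N, ‖(y:ℂ)*I - (n:ℂ)‖) ≠ 0 := by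
          refine Finset.prod_ne_zero_iff.mpr fun n hn => ?_
          have hn1 := (Finset.mem_Icc.mp hn).1
          intro hc
          rw [norm_eq_zero] at hc
          have h2 : ((y:ℂ)*I - (n:ℂ)).re = 0 := by rw [hc]; simp
          simp at h2
          omega
        have hprodeq : (∏ n ∈ Finset.Icc 1 N, ‖(y:ℂ)*I - (n:ℂ)‖)
            = ∏ n ∈ Finset.Icc 1 N, ‖(y:ℂ)*I + (n:ℂ)‖ :=
          Finset.prod_congr rfl (fun n _ => hPQ n)
        have h1 := key ((y:ℂ)*I)
        rw [hprodeq] at h1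
        have hQne : (∏ n ∈ Finset.Icc 1 N, ‖(y:ℂ)*I + (n:ℂ)‖) ≠ 0 :=
          hprodeq ▸ hPne
        have h2 : ‖G ((y:ℂ)*I)‖ = ‖p ((y:ℂ)*I)‖ :=
          mul_right_cancel₀ hQne h1
        rw [h2]
        apply hp_bound
        simp
      -- bounded on the positive real axis
      have hre : IsBoundedUnder (· ≤ ·) atTop fun x : ℝ => ‖G (x:ℂ)‖ := by
        apply isBoundedUnder_of_eventually_le (a := M * 3^N)
        filter_upwards [eventually_ge_atTop (2*N+1 : ℝ)] with x hx
        have hxN : ∀ n ∈ Finset.Icc 1 N, (n:ℝ) ≤ x := by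
          intro n hn
          have h2 := (Finset.mem_Icc.mp hn).2
          have h3 : (n:ℝ) ≤ N := by exact_mod_cast h2
          have h4 : (0:ℝ) ≤ N := Nat.cast_nonneg N
          linarith
        have hPr : ∀ n ∈ Finset.Icc 1 N, ‖(x:ℂ) - (n:ℂ)‖ = x - (n:ℝ) := by
          intro n hn
          rw [show ((x:ℂ) - (n:ℂ)) = (((x - (n:ℝ)):ℝ):ℂ) by push_cast; ring,
            Complex.norm_real, Real.norm_eq_abs, _root_.abs_of_nonneg (by linarith [hxN n hn])]
        have h0x : (0:ℝ) ≤ x := le_trans (by positivity) hx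
        have hQr : ∀ n ∈ Finset.Icc 1 N, ‖(x:ℂ) + (n:ℂ)‖ = x + (n:ℝ) := by
          intro n hn
          rw [show ((x:ℂ) + (n:ℂ)) = (((x + (n:ℝ)):ℝ):ℂ) by push_cast; ring,
            Complex.norm_real, Real.norm_eq_abs,
            _root_.abs_of_nonneg (add_nonneg h0x (Nat.cast_nonneg n))]
        have hRpos : (0:ℝ) < ∏ n ∈ Finset.Icc 1 N, (x - (n:ℝ)) := by
          refine Finset.prod_pos fun n hn => ?_
          have h2 := (Finset.mem_Icc.mp hn).2
          have h3 : (n:ℝ) ≤ N := by exact_mod_cast h2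
          linarith
        have hQle : (∏ n ∈ Finset.Icc 1 N, (x + (n:ℝ)))
            ≤ 3^N * ∏ n ∈ Finset.Icc 1 N, (x - (n:ℝ)) := by
          have hstep : (∏ n ∈ Finset.Icc 1 N, (x + (n:ℝ)))
              ≤ ∏ n ∈ Finset.Icc 1 N, 3 * (x - (n:ℝ)) := by
            refine Finset.prod_le_prod
              (fun n hn => add_nonneg h0x (Nat.cast_nonneg n)) fun n hn => ?_
            have h2 := (Finset.mem_Icc.mp hn).2
            have h3 : (n:ℝ) ≤ N := by exact_mod_cast h2
            linarith
          calc (∏ n ∈ Finset.Icc 1 N, (x + (n:ℝ)))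
              ≤ ∏ n ∈ Finset.Icc 1 N, 3 * (x - (n:ℝ)) := hstep
            _ = 3^N * ∏ n ∈ Finset.Icc 1 N, (x - (n:ℝ)) := by
                rw [Finset.prod_mul_distrib, Finset.prod_const, Nat.card_Icc]
                simp
        have h1 := key (x:ℂ)
        rw [Finset.prod_congr rfl hPr, Finset.prod_congr rfl hQr] at h1
        have hpx : ‖p (x:ℂ)‖ ≤ M := hp_bound _ (by simpa using h0x)
        have h3 : ‖G (x:ℂ)‖ * ∏ n ∈ Finset.Icc 1 N, (x - (n:ℝ))
            ≤ (M * 3^N) * ∏ n ∈ Finset.Icc 1 N, (x - (n:ℝ)) := by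
          rw [h1]
          calc ‖p (x:ℂ)‖ * ∏ n ∈ Finset.Icc 1 N, (x + (n:ℝ))
              ≤ M * (3^N * ∏ n ∈ Finset.Icc 1 N, (x - (n:ℝ))) :=
                mul_le_mul hpx hQle
                  (Finset.prod_nonneg fun n _ => add_nonneg h0x (Nat.cast_nonneg n)) hM.le
            _ = (M * 3^N) * ∏ n ∈ Finset.Icc 1 N, (x - (n:ℝ)) := by ring
        exact le_of_mul_le_mul_right h3 hRpos
      -- growth bound
      have hBig : ∃ c < (2:ℝ), ∃ B, G =O[Bornology.cobounded ℂ ⊓ 𝓟 {z : ℂ | 0 < z.re}]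
          fun z => Real.exp (B * ‖z‖ ^ c) := by
        refine ⟨1, one_lt_two, (N:ℝ), ?_⟩
        rw [Asymptotics.isBigO_iff]
        refine ⟨M * 2^N, ?_⟩
        rw [eventually_inf_principal]
        filter_upwards [tendsto_norm_cobounded_atTop.eventually_ge_atTop (2*N+1 : ℝ)]
          with z hz hz0
        have hz0' : (0:ℝ) < z.re := hz0
        have hNz : (0:ℝ) ≤ N := Nat.cast_nonneg N
        have hz1 : (1:ℝ) ≤ ‖z‖ := by linarith
        have hPge : (1:ℝ) ≤ ∏ n ∈ Finset.Icc 1 N, ‖z - (n:ℂ)‖ := by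
          have h1le : (∏ _n ∈ Finset.Icc 1 N, (1:ℝ))
              ≤ ∏ n ∈ Finset.Icc 1 N, ‖z - (n:ℂ)‖ := by
            refine Finset.prod_le_prod (fun _ _ => zero_le_one) fun n hn => ?_
            have h2 := (Finset.mem_Icc.mp hn).2
            have hnN : (n:ℝ) ≤ N := by exact_mod_cast h2
            have h4 := norm_sub_norm_le z ((n:ℂ))
            have h6 : ‖((n:ℂ))‖ = (n:ℝ) := by simp
            rw [h6] at h4
            linarith
          simpa using h1le
        have hq_le : ‖q z‖ ≤ M := by
          have h1 : ‖p z‖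
              = (∏ n ∈ Finset.Icc 1 N, ‖z - (n:ℂ)‖) * ‖q z‖ := by
            rw [hpq z, norm_mul, hPabs]
          have h2 : ‖p z‖ ≤ M := hp_bound z hz0'.le
          calc ‖q z‖ = 1 * ‖q z‖ := (one_mul _).symm
            _ ≤ (∏ n ∈ Finset.Icc 1 N, ‖z - (n:ℂ)‖) * ‖q z‖ :=
                mul_le_mul_of_nonneg_right hPge (by positivity)
            _ = ‖p z‖ := h1.symm
            _ ≤ M := h2
        have hQ_le : ‖∏ n ∈ Finset.Icc 1 N, (z + (n:ℂ))‖ ≤ (2*‖z‖)^N := by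
          rw [hQabs]
          calc (∏ n ∈ Finset.Icc 1 N, ‖z + (n:ℂ)‖)
              ≤ ∏ _n ∈ Finset.Icc 1 N, (2*‖z‖) := by
                refine Finset.prod_le_prod (fun _ _ => by positivity) fun n hn => ?_
                have h2 := (Finset.mem_Icc.mp hn).2
                have hnN : (n:ℝ) ≤ N := by exact_mod_cast h2
                calc ‖z + (n:ℂ)‖ ≤ ‖z‖ + ‖(n:ℂ)‖ :=
                      norm_add_le _ _
                  _ ≤ ‖z‖ + (n:ℝ) := by rw [hnabs n]
                  _ ≤ 2*‖z‖ := by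
                      have : (n:ℝ) ≤ ‖z‖ := by linarith
                      linarith
            _ = (2*‖z‖)^N := by rw [Finset.prod_const, Nat.card_Icc]; simp
        have hnorm : ‖G z‖ ≤ M * 2^N * Real.exp ((N:ℝ) * ‖z‖) := by
          rw [hG_val, norm_mul]
          have hzN : ‖z‖^N ≤ Real.exp ((N:ℝ) * ‖z‖) := by
            calc ‖z‖^N ≤ (Real.exp ‖z‖)^N :=
                  pow_le_pow_left₀ (norm_nonneg z)
                    (by linarith [Real.add_one_le_exp ‖z‖]) N
              _ = Real.exp ((N:ℝ) * ‖z‖) := by rw [← Real.exp_nat_mul]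
          calc ‖q z‖ * ‖∏ n ∈ Finset.Icc 1 N, (z + (n:ℂ))‖
              ≤ M * (2*‖z‖)^N := mul_le_mul hq_le hQ_le (by positivity) hM.le
            _ = M * 2^N * ‖z‖^N := by rw [mul_pow]; ring
            _ ≤ M * 2^N * Real.exp ((N:ℝ) * ‖z‖) :=
                mul_le_mul_of_nonneg_left hzN (by positivity)
        calc ‖G z‖ ≤ M * 2^N * Real.exp ((N:ℝ) * ‖z‖) := hnorm
          _ = M * 2^N * ‖Real.exp ((N:ℝ) * ‖z‖ ^ (1:ℝ))‖ := by
              rw [Real.norm_eq_abs, _root_.abs_of_pos (Real.exp_pos _), Real.rpow_one]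
      -- Phragmén–Lindelöf
      have hPL : ‖G ((σ:ℝ):ℂ)‖ ≤ M :=
        PhragmenLindelof.right_half_plane_of_bounded_on_real hGd.diffContOnCl hBig hre him
          (by simp; linarith)
      -- evaluate at σ
      have hPσ : ∀ n ∈ Finset.Icc 1 N, ‖(σ:ℂ) - (n:ℂ)‖ = (n:ℝ) - σ := by
        intro n hn
        have hn1 := (Finset.mem_Icc.mp hn).1
        have hn1' : (1:ℝ) ≤ (n:ℝ) := by exact_mod_cast hn1
        rw [show ((σ:ℂ) - (n:ℂ)) = (((σ - (n:ℝ)):ℝ):ℂ) by push_cast; ring,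
          Complex.norm_real, Real.norm_eq_abs, _root_.abs_of_nonpos (by linarith), neg_sub]
      have hQσ : ∀ n ∈ Finset.Icc 1 N, ‖(σ:ℂ) + (n:ℂ)‖ = (n:ℝ) + σ := by
        intro n hn
        rw [show ((σ:ℂ) + (n:ℂ)) = (((σ + (n:ℝ)):ℝ):ℂ) by push_cast; ring,
          Complex.norm_real, Real.norm_eq_abs, _root_.abs_of_nonneg (by positivity), add_comm]
      have hQσpos : (0:ℝ) < ∏ n ∈ Finset.Icc 1 N, ((n:ℝ) + σ) := by
        refine Finset.prod_pos fun n hn => ?_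
        have hn1 := (Finset.mem_Icc.mp hn).1
        have : (1:ℝ) ≤ (n:ℝ) := by exact_mod_cast hn1
        linarith
      have h1 := key ((σ:ℝ):ℂ)
      rw [Finset.prod_congr rfl hPσ, Finset.prod_congr rfl hQσ] at h1
      have hRσnn : (0:ℝ) ≤ ∏ n ∈ Finset.Icc 1 N, ((n:ℝ) - σ) := by
        refine Finset.prod_nonneg fun n hn => ?_
        have hn1 := (Finset.mem_Icc.mp hn).1
        have : (1:ℝ) ≤ (n:ℝ) := by exact_mod_cast hn1
        linarith
      have h2 : ‖p ((σ:ℝ):ℂ)‖ * ∏ n ∈ Finset.Icc 1 N, ((n:ℝ) + σ)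
          ≤ M * ∏ n ∈ Finset.Icc 1 N, ((n:ℝ) - σ) := by
        rw [← h1]
        refine mul_le_mul_of_nonneg_right ?_ hRσnn
        exact hPL
      have h3 := blaschke_prod_bound σ hσ1 hσ2 N
      have h4 : ((2*N+1 : ℝ) * ‖p ((σ:ℝ):ℂ)‖) * ∏ n ∈ Finset.Icc 1 N, ((n:ℝ) + σ)
          ≤ M * ∏ n ∈ Finset.Icc 1 N, ((n:ℝ) + σ) := by
        calc ((2*N+1 : ℝ) * ‖p ((σ:ℝ):ℂ)‖) * ∏ n ∈ Finset.Icc 1 N, ((n:ℝ) + σ)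
            = (2*N+1 : ℝ) * (‖p ((σ:ℝ):ℂ)‖ * ∏ n ∈ Finset.Icc 1 N, ((n:ℝ) + σ)) := by
              ring
          _ ≤ (2*N+1 : ℝ) * (M * ∏ n ∈ Finset.Icc 1 N, ((n:ℝ) - σ)) :=
              mul_le_mul_of_nonneg_left h2 (by positivity)
          _ = M * ((2*N+1 : ℝ) * ∏ n ∈ Finset.Icc 1 N, ((n:ℝ) - σ)) := by ring
          _ ≤ M * ∏ n ∈ Finset.Icc 1 N, ((n:ℝ) + σ) :=
              mul_le_mul_of_nonneg_left h3 hM.le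
      exact le_of_mul_le_mul_right h4 hQσpos
    -- conclude p σ = 0
    by_contra hne
    have habs : 0 < ‖p ((σ:ℝ):ℂ)‖ := by
      exact norm_pos_iff.mpr hne
    obtain ⟨N, hN'⟩ := exists_nat_gt (M / ‖p ((σ:ℝ):ℂ)‖)
    have hNle := hN N
    rw [div_lt_iff₀ habs] at hN'
    have hcast : (0:ℝ) ≤ (N:ℝ) := Nat.cast_nonneg N
    nlinarith
  -- identity theorem: p vanishes identically
  have hpzero : ∀ z, p z = 0 := by
    have hA : AnalyticOnNhd ℂ p Set.univ :=
      (Complex.analyticOnNhd_univ_iff_differentiable).mpr hp_d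
    have hfreq : ∃ᶠ z in nhdsWithin ((3/4 : ℝ):ℂ) {((3/4:ℝ):ℂ)}ᶜ, p z = 0 := by
      have hu : Filter.Tendsto (fun k : ℕ => (((3/4 + (1/5) * (1/(k+1)) : ℝ)):ℂ)) atTop
          (nhdsWithin ((3/4 : ℝ):ℂ) {((3/4:ℝ):ℂ)}ᶜ) := by
        apply tendsto_nhdsWithin_of_tendsto_nhds_of_eventually_within
        · have hr : Filter.Tendsto (fun k : ℕ => (3/4 + (1/5) * (1/(k+1)) : ℝ)) atTop
              (nhds (3/4 + (1/5) * 0)) :=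
            (tendsto_const_nhds.add
              ((tendsto_one_div_add_atTop_nhds_zero_nat).const_mul (1/5)))
          rw [mul_zero, add_zero] at hr
          exact (Complex.continuous_ofReal.tendsto _).comp hr
        · refine Filter.Eventually.of_forall fun k => ?_
          simp only [Set.mem_compl_iff, Set.mem_singleton_iff]
          intro hc
          have := Complex.ofReal_injective hc
          have hk : (0:ℝ) < 1/(k+1) := by positivity
          nlinarith
      refine hu.frequently (Filter.Frequently.of_forall fun k => ?_)
      apply hpσ
      · have hk : (0:ℝ) < 1/((k:ℝ)+1) := by positivity
        linarith
      · have hk : 1/((k:ℝ)+1) ≤ 1 := by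
          rw [div_le_one (by positivity)]
          linarith [Nat.cast_nonneg (α := ℝ) k]
        linarith
    have := hA.eqOn_zero_of_preconnected_of_frequently_eq_zero isPreconnected_univ
      (Set.mem_univ _) hfreq
    exact fun z => this (Set.mem_univ z)
  intro w
  have h1 := hpzero (-I * w)
  rw [hp_val] at h1
  have h2 : (-I * w) * I = w := by
    rw [mul_right_comm, neg_mul, Complex.I_mul_I, neg_neg, one_mul]
  rw [h2] at h1
  exact (mul_eq_zero.mp h1).resolve_right (Complex.exp_ne_zero _)

namespace ExpType

lemma const (c : ℂ) : ExpType (fun _ => c) := by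
  refine ⟨differentiable_const c, ‖c‖ + 1, 1, by positivity, one_pos, fun z => ?_⟩
  have h1 : (1:ℝ) ≤ Real.exp (1 * |z.im|) := by
    rw [one_mul]
    exact Real.one_le_exp (abs_nonneg _)
  nlinarith [norm_nonneg c]

lemma add {f g : ℂ → ℂ} (hf : ExpType f) (hg : ExpType g) : ExpType (fun z => f z + g z) := by
  obtain ⟨hfd, M1, r1, hM1, hr1, hb1⟩ := hf
  obtain ⟨hgd, M2, r2, hM2, hr2, hb2⟩ := hg
  refine ⟨hfd.add hgd, M1 + M2, max r1 r2, by positivity, lt_max_of_lt_left hr1, fun z => ?_⟩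
  have e1 : Real.exp (r1 * |z.im|) ≤ Real.exp (max r1 r2 * |z.im|) :=
    Real.exp_le_exp.mpr (mul_le_mul_of_nonneg_right (le_max_left _ _) (abs_nonneg _))
  have e2 : Real.exp (r2 * |z.im|) ≤ Real.exp (max r1 r2 * |z.im|) :=
    Real.exp_le_exp.mpr (mul_le_mul_of_nonneg_right (le_max_right _ _) (abs_nonneg _))
  calc ‖f z + g z‖ ≤ ‖f z‖ + ‖g z‖ :=
        norm_add_le _ _
    _ ≤ M1 * Real.exp (r1 * |z.im|) + M2 * Real.exp (r2 * |z.im|) :=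
        add_le_add (hb1 z) (hb2 z)
    _ ≤ (M1 + M2) * Real.exp (max r1 r2 * |z.im|) := by nlinarith

lemma mul {f g : ℂ → ℂ} (hf : ExpType f) (hg : ExpType g) : ExpType (fun z => f z * g z) := by
  obtain ⟨hfd, M1, r1, hM1, hr1, hb1⟩ := hf
  obtain ⟨hgd, M2, r2, hM2, hr2, hb2⟩ := hg
  refine ⟨hfd.mul hgd, M1 * M2, r1 + r2, by positivity, by positivity, fun z => ?_⟩
  rw [norm_mul]
  calc ‖f z‖ * ‖g z‖
      ≤ (M1 * Real.exp (r1 * |z.im|)) * (M2 * Real.exp (r2 * |z.im|)) := by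
        exact mul_le_mul (hb1 z) (hb2 z) (norm_nonneg _) (by positivity)
    _ = (M1 * M2) * Real.exp ((r1 + r2) * |z.im|) := by
        rw [add_mul, Real.exp_add]; ring
  
lemma const_mul {f : ℂ → ℂ} (hf : ExpType f) (c : ℂ) : ExpType (fun z => c * f z) :=
  mul (const c) hf

lemma comp_add_const {f : ℂ → ℂ} (hf : ExpType f) (w : ℂ) : ExpType (fun z => f (z + w)) := by
  obtain ⟨hfd, M, r, hM, hr, hb⟩ := hf
  refine ⟨hfd.comp (differentiable_id.add_const w), M * Real.exp (r * |w.im|), r,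
    by positivity, hr, fun z => ?_⟩
  calc ‖f (z + w)‖ ≤ M * Real.exp (r * |(z + w).im|) := hb _
    _ ≤ M * Real.exp (r * |w.im|) * Real.exp (r * |z.im|) := by
        rw [mul_assoc, ← Real.exp_add]
        refine mul_le_mul_of_nonneg_left (Real.exp_le_exp.mpr ?_) hM.le
        rw [Complex.add_im, ← mul_add]
        refine mul_le_mul_of_nonneg_left ?_ hr.le
        calc |z.im + w.im| ≤ |z.im| + |w.im| := abs_add_le _ _
          _ = |w.im| + |z.im| := by ring

/-- The reflection `z ↦ conj (f (conj z))` of an entire function is entire. -/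
lemma differentiable_conj_reflect {f : ℂ → ℂ} (hf : Differentiable ℂ f) :
    Differentiable ℂ (fun z => conj (f (conj z))) := by
  intro z₀
  have h1 := hasDerivAt_iff_tendsto.mp (hf (conj z₀)).hasDerivAt
  have h2 : Tendsto (fun w : ℂ => conj w) (nhds z₀) (nhds (conj z₀)) :=
    (Complex.continuous_conj.tendsto z₀)
  have h3 := h1.comp h2
  have hnormconj : ∀ u : ℂ, ‖conj u‖ = ‖u‖ := fun u => by
    rw [Complex.norm_conj]
  have key : HasDerivAt (fun z => conj (f (conj z))) (conj (deriv f (conj z₀))) z₀ := by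
    rw [hasDerivAt_iff_tendsto]
    refine h3.congr fun w => ?_
    simp only [Function.comp_apply]
    congr 1
    · rw [← map_sub, hnormconj]
    · rw [show conj (f (conj w)) - conj (f (conj z₀)) - (w - z₀) • conj (deriv f (conj z₀))
          = conj (f (conj w) - f (conj z₀) - (conj w - conj z₀) • deriv f (conj z₀)) by
        simp only [smul_eq_mul, map_sub, map_mul, Complex.conj_conj],
        hnormconj]
  exact key.differentiableAt

lemma conj_reflect {f : ℂ → ℂ} (hf : ExpType f) : ExpType (fun z => conj (f (conj z))) := by
  obtain ⟨hfd, M, r, hM, hr, hb⟩ := hf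
  refine ⟨differentiable_conj_reflect hfd, M, r, hM, hr, fun z => ?_⟩
  rw [Complex.norm_conj]
  calc ‖f (conj z)‖ ≤ M * Real.exp (r * |(conj z).im|) := hb _
    _ = M * Real.exp (r * |z.im|) := by rw [Complex.conj_im, abs_neg]

lemma finset_sum {ι : Type*} (s : Finset ι) (g : ι → ℂ → ℂ) (hg : ∀ j ∈ s, ExpType (g j)) :
    ExpType (fun z => ∑ j ∈ s, g j z) := by
  classical
  induction s using Finset.induction with
  | empty => simpa using const 0
  | @insert a s' hx ih =>
    have h1 : ExpType (fun z => g a z + ∑ j ∈ s', g j z) :=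
      add (hg a (Finset.mem_insert_self a s')) (ih fun j hj => hg j (Finset.mem_insert_of_mem hj))
    have : (fun z => ∑ j ∈ insert a s', g j z) = fun z => g a z + ∑ j ∈ s', g j z := by
      funext z
      exact Finset.sum_insert hx
    rwa [this]

end ExpType

namespace FinExpType

variable {V : Type*} [AddCommGroup V] [Module ℂ V]
variable {W : Type*} [AddCommGroup W] [Module ℂ W]

lemma of_fintype {ι : Type*} [Fintype ι] (v : ι → V) (g : ι → ℂ → ℂ)
    (hg : ∀ j, ExpType (g j)) {f : ℂ → V} (hf : ∀ z, f z = ∑ j, g j z • v j) :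
    FinExpType f := by
  classical
  refine ⟨Fintype.card ι, v ∘ (Fintype.equivFin ι).symm, g ∘ (Fintype.equivFin ι).symm,
    fun j => hg _, fun z => ?_⟩
  rw [hf z]
  exact (Equiv.sum_comp (Fintype.equivFin ι).symm (fun i => g i z • v i)).symm

lemma single (v : V) {g : ℂ → ℂ} (hg : ExpType g) : FinExpType (fun z => g z • v) := by
  refine of_fintype (ι := Fin 1) (fun _ => v) (fun _ => g) (fun _ => hg) fun z => ?_
  simp

lemma const (v : V) : FinExpType (fun _ : ℂ => v) := by
  have := single v (ExpType.const 1)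
  simpa using this

lemma zero : FinExpType (fun _ : ℂ => (0 : V)) := const 0

lemma add {f g : ℂ → V} (hf : FinExpType f) (hg : FinExpType g) :
    FinExpType (fun z => f z + g z) := by
  obtain ⟨n, v, gf, hgf, hfr⟩ := hf
  obtain ⟨m, w, gg, hgg, hgr⟩ := hg
  refine of_fintype (ι := Fin n ⊕ Fin m) (Sum.elim v w) (Sum.elim gf gg)
    (fun j => by cases j <;> simp [hgf, hgg]) fun z => ?_
  rw [Fintype.sum_sum_type]
  simp only [Sum.elim_inl, Sum.elim_inr]
  rw [hfr z, hgr z]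

lemma smul (c : ℂ) {f : ℂ → V} (hf : FinExpType f) : FinExpType (fun z => c • f z) := by
  obtain ⟨n, v, g, hg, hfr⟩ := hf
  refine of_fintype v (fun j z => c * g j z) (fun j => (hg j).const_mul c) fun z => ?_
  rw [hfr z, Finset.smul_sum]
  exact Finset.sum_congr rfl fun j _ => by rw [mul_smul]

lemma map (T : V →ₗ[ℂ] W) {f : ℂ → V} (hf : FinExpType f) :
    FinExpType (fun z => T (f z)) := by
  obtain ⟨n, v, g, hg, hfr⟩ := hf
  refine of_fintype (fun j => T (v j)) g hg fun z => ?_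
  rw [hfr z, map_sum]
  exact Finset.sum_congr rfl fun j _ => by rw [map_smul]

lemma comp_add_const {f : ℂ → V} (hf : FinExpType f) (w : ℂ) :
    FinExpType (fun z => f (z + w)) := by
  obtain ⟨n, v, g, hg, hfr⟩ := hf
  exact of_fintype v (fun j z => g j (z + w)) (fun j => (hg j).comp_add_const w)
    fun z => hfr (z + w)

lemma mul {A : Type*} [Ring A] [Algebra ℂ A] {f g : ℂ → A}
    (hf : FinExpType f) (hg : FinExpType g) : FinExpType (fun z => f z * g z) := by
  obtain ⟨n, v, gf, hgf, hfr⟩ := hf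
  obtain ⟨m, w, gg, hgg, hgr⟩ := hg
  refine of_fintype (ι := Fin n × Fin m) (fun jk => v jk.1 * w jk.2)
    (fun jk z => gf jk.1 z * gg jk.2 z)
    (fun jk => (hgf jk.1).mul (hgg jk.2)) fun z => ?_
  rw [hfr z, hgr z, Finset.sum_mul_sum, Fintype.sum_prod_type]
  refine Finset.sum_congr rfl fun j _ => Finset.sum_congr rfl fun k _ => ?_
  rw [smul_mul_smul_comm]

lemma star_reflect {A : Type*} [Ring A] [Algebra ℂ A] [StarRing A] [StarModule ℂ A]
    {f : ℂ → A} (hf : FinExpType f) : FinExpType (fun z => star (f (conj z))) := by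
  obtain ⟨n, v, g, hg, hfr⟩ := hf
  refine of_fintype (fun j => star (v j)) (fun j z => conj (g j (conj z)))
    (fun j => (hg j).conj_reflect) fun z => ?_
  rw [hfr (conj z), star_sum]
  refine Finset.sum_congr rfl fun j _ => ?_
  simp only [star_smul]
  rw [starRingEnd_apply, starRingEnd_apply]

end FinExpType


namespace FinExpType

variable {V : Type*} [AddCommGroup V] [Module ℂ V]

lemma sub {f g : ℂ → V} (hf : FinExpType f) (hg : FinExpType g) :
    FinExpType (fun z => f z - g z) := by
  have h := hf.add (hg.smul (-1 : ℂ))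
  have : (fun z => f z + (-1 : ℂ) • g z) = fun z => f z - g z := by
    funext z; rw [neg_one_smul, ← sub_eq_add_neg]
  rwa [this] at h

end FinExpType

lemma interp_unique {V : Type*} [AddCommGroup V] [Module ℂ V] {F G : ℂ → V}
    (hF : FinExpType F) (hG : FinExpType G)
    (h : ∀ n : ℕ, F ((n : ℂ) * Complex.I) = G ((n : ℂ) * Complex.I)) : ∀ z, F z = G z := by
  intro z
  rw [← sub_eq_zero, ← (Module.forall_dual_apply_eq_zero_iff ℂ (F z - G z))]
  intro L
  obtain ⟨n, v, g, hg, hrep⟩ := hF.sub hG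
  have hsval : ∀ w, (∑ j, g j w * L (v j)) = L (F w - G w) := fun w => by
    rw [show F w - G w = (fun z => F z - G z) w from rfl, hrep w, map_sum]
    exact (Finset.sum_congr rfl fun j _ => by rw [map_smul, smul_eq_mul]).symm
  have hsexp : ExpType (fun w => ∑ j, g j w * L (v j)) :=
    ExpType.finset_sum _ _ (fun j _ => (hg j).mul (ExpType.const (L (v j))))
  obtain ⟨hd, M, r, hM, hr, hb⟩ := hsexp
  have h0 : ∀ k : ℕ, (fun w => ∑ j, g j w * L (v j)) ((k:ℂ) * Complex.I) = 0 := by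
    intro k
    simp only []
    rw [hsval, h k, sub_self, map_zero]
  have := carlson hd hM hr hb h0 z
  rw [hsval z] at this
  exact this


/-- Theorem A.1 of the paper: if `φ` is a unital algebra endomorphism of a unital complex
*-algebra `B` with `φ (φ (b*)*) = b`, and for every `b` in a generating set `S` the orbit
`n ↦ φⁿ b` interpolates to a function of finite exponential type, then `φ` is the value at `i`
of a unique exponential one-parameter group on `B`. -/
theorem exists_unique_exp_one_param_group_of_generators
    {B : Type*} [Ring B] [Algebra ℂ B] [StarRing B] [StarModule ℂ B]
    (S : Set B) (hS : StarAlgebra.adjoin ℂ S = ⊤)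
    (φ : B →ₐ[ℂ] B) (hφ : ∀ b : B, φ (star (φ (star b))) = b)
    (hexp : ∀ b ∈ S, ∃ f : ℂ → B, FinExpType f ∧
      ∀ n : ℕ, f (n * Complex.I) = (⇑φ)^[n] b) :
    ∃! β : ℂ → (B ≃ₐ[ℂ] B), IsExpOneParamGroup β ∧ ∀ b : B, β Complex.I b = φ b := by
  -- iterates of φ respect the algebra structure
  have iter_add : ∀ n : ℕ, ∀ a b : B, (⇑φ)^[n] (a + b) = (⇑φ)^[n] a + (⇑φ)^[n] b := by
    intro n
    induction n with
    | zero => intro a b; simp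
    | succ n ih =>
      intro a b
      rw [Function.iterate_succ_apply, Function.iterate_succ_apply,
        Function.iterate_succ_apply, map_add, ih]
  have iter_mul : ∀ n : ℕ, ∀ a b : B, (⇑φ)^[n] (a * b) = (⇑φ)^[n] a * (⇑φ)^[n] b := by
    intro n
    induction n with
    | zero => intro a b; simp
    | succ n ih =>
      intro a b
      rw [Function.iterate_succ_apply, Function.iterate_succ_apply,
        Function.iterate_succ_apply, map_mul, ih]
  have iter_alg : ∀ n : ℕ, ∀ c : ℂ, (⇑φ)^[n] (algebraMap ℂ B c) = algebraMap ℂ B c := by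
    intro n
    induction n with
    | zero => intro c; simp
    | succ n ih =>
      intro c
      rw [Function.iterate_succ_apply, AlgHom.commutes, ih]
  -- the inverse map ψ
  set ψ : B → B := fun x => star (φ (star x)) with hψ_def
  have hφψ : ∀ x, φ (ψ x) = x := hφ
  have hψiter : ∀ n : ℕ, ∀ x : B, ψ^[n] x = star ((⇑φ)^[n] (star x)) := by
    intro n
    induction n with
    | zero => intro x; simp
    | succ n ih =>
      intro x
      rw [Function.iterate_succ_apply, ih, Function.iterate_succ_apply]
      congr 2
      rw [hψ_def]
      simp
  have hφψiter : ∀ n : ℕ, ∀ x : B, (⇑φ)^[n] (ψ^[n] x) = x := by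
    intro n
    induction n with
    | zero => intro x; simp
    | succ n ih =>
      intro x
      rw [Function.iterate_succ_apply' (f := ψ), Function.iterate_succ_apply (f := ⇑φ),
        hφψ, ih]
  have iter_star_key : ∀ n : ℕ, ∀ x : B, (⇑φ)^[n] (star ((⇑φ)^[n] (star x))) = x := by
    intro n x
    rw [← hψiter n x]
    exact hφψiter n x
  -- interpolants shift by I under φ
  have hinterp_shift : ∀ (b : B) (F : ℂ → B), FinExpType F →
      (∀ n : ℕ, F ((n:ℂ) * Complex.I) = (⇑φ)^[n] b) →
      ∀ (n : ℕ) (w : ℂ), (⇑φ)^[n] (F w) = F (w + (n:ℂ) * Complex.I) := by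
    intro b F hFfin hFval
    have hstep : ∀ w, φ (F w) = F (w + Complex.I) := by
      have h1 : FinExpType (fun w => φ (F w)) := FinExpType.map φ.toLinearMap hFfin
      have h2 : FinExpType (fun w => F (w + Complex.I)) := hFfin.comp_add_const Complex.I
      have h3 : ∀ n : ℕ, (fun w => φ (F w)) ((n:ℂ) * Complex.I)
          = (fun w => F (w + Complex.I)) ((n:ℂ) * Complex.I) := by
        intro n
        simp only []
        rw [hFval n, show ((n:ℂ) * Complex.I + Complex.I) = ((n+1 : ℕ):ℂ) * Complex.I by
          push_cast; ring, hFval (n+1), Function.iterate_succ_apply']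
      exact interp_unique h1 h2 h3
    intro n
    induction n with
    | zero => intro w; simp
    | succ n ih =>
      intro w
      rw [Function.iterate_succ_apply', ih w, hstep,
        show (w + (n:ℂ) * Complex.I + Complex.I) = w + ((n+1:ℕ):ℂ) * Complex.I by
          push_cast; ring]
  -- star-reflection of an interpolant interpolates the star
  have hinterp_star : ∀ (b : B) (F : ℂ → B), FinExpType F →
      (∀ n : ℕ, F ((n:ℂ) * Complex.I) = (⇑φ)^[n] b) →
      ∀ n : ℕ, star (F (conj ((n:ℂ) * Complex.I))) = (⇑φ)^[n] (star b) := by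
    intro b F hFfin hFval n
    have h1 : (⇑φ)^[n] (F (-((n:ℂ) * Complex.I))) = b := by
      have := hinterp_shift b F hFfin hFval n (-((n:ℂ) * Complex.I))
      rw [this, neg_add_cancel, show (0:ℂ) = ((0:ℕ):ℂ) * Complex.I by simp, hFval 0]
      simp
    have h2 : conj ((n:ℂ) * Complex.I) = -((n:ℂ) * Complex.I) := by
      rw [map_mul, Complex.conj_I, Complex.conj_natCast, mul_neg]
    rw [h2]
    have h3 : star b = star ((⇑φ)^[n] (F (-((n:ℂ) * Complex.I)))) := by rw [h1]
    rw [h3]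
    have h4 : (⇑φ)^[n] (star ((⇑φ)^[n] (F (-((n:ℂ) * Complex.I)))))
        = (⇑φ)^[n] (star ((⇑φ)^[n] (star (star (F (-((n:ℂ) * Complex.I))))))) := by
      rw [star_star]
    rw [h4, iter_star_key n (star (F (-((n:ℂ) * Complex.I))))]
  -- the set of interpolatable elements is a star subalgebra containing S, hence everything
  have hAll : ∀ b : B, ∃ F : ℂ → B, FinExpType F ∧
      ∀ n : ℕ, F ((n:ℂ) * Complex.I) = (⇑φ)^[n] b := by
    set K : StarSubalgebra ℂ B :=
      { carrier := {b : B | ∃ F : ℂ → B, FinExpType F ∧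
          ∀ n : ℕ, F ((n:ℂ) * Complex.I) = (⇑φ)^[n] b}
        mul_mem' := by
          rintro a b ⟨F, hF, hFv⟩ ⟨G, hG, hGv⟩
          exact ⟨fun z => F z * G z, hF.mul hG, fun n => by
            simp only []
            rw [hFv n, hGv n, iter_mul]⟩
        add_mem' := by
          rintro a b ⟨F, hF, hFv⟩ ⟨G, hG, hGv⟩
          exact ⟨fun z => F z + G z, hF.add hG, fun n => by
            simp only []
            rw [hFv n, hGv n, iter_add]⟩
        algebraMap_mem' := by
          intro c
          exact ⟨fun _ => algebraMap ℂ B c, FinExpType.const _, fun n => (iter_alg n c).symm⟩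
        star_mem' := by
          rintro b ⟨F, hF, hFv⟩
          exact ⟨fun z => star (F (conj z)), hF.star_reflect,
            fun n => hinterp_star b F hF hFv n⟩ } with hK_def
    have hSK : S ⊆ (K : Set B) := by
      intro b hb
      obtain ⟨F, hF, hFv⟩ := hexp b hb
      exact ⟨F, hF, fun n => hFv n⟩
    have : StarAlgebra.adjoin ℂ S ≤ K := StarAlgebra.adjoin_le hSK
    rw [hS] at this
    intro b
    exact this (by trivial : b ∈ (⊤ : StarSubalgebra ℂ B))
  choose Ffun hFfin hFval using hAll
  -- canonical uniqueness of interpolants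
  have hFuniq : ∀ (b : B) (G : ℂ → B), FinExpType G →
      (∀ n : ℕ, G ((n:ℂ) * Complex.I) = (⇑φ)^[n] b) → ∀ z, G z = Ffun b z := by
    intro b G hG hGv
    exact interp_unique hG (hFfin b) (fun n => by rw [hGv n, hFval b n])
  -- properties of the family b ↦ Ffun b
  have hFadd : ∀ (a b : B) (z : ℂ), Ffun a z + Ffun b z = Ffun (a + b) z := by
    intro a b z
    exact hFuniq (a+b) (fun w => Ffun a w + Ffun b w) ((hFfin a).add (hFfin b))
      (fun n => by
        rw [hFval a n, hFval b n, iter_add]) z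
  have hFmul : ∀ (a b : B) (z : ℂ), Ffun a z * Ffun b z = Ffun (a * b) z := by
    intro a b z
    exact hFuniq (a*b) (fun w => Ffun a w * Ffun b w) ((hFfin a).mul (hFfin b))
      (fun n => by
        rw [hFval a n, hFval b n, iter_mul]) z
  have hFalg : ∀ (c : ℂ) (z : ℂ), algebraMap ℂ B c = Ffun (algebraMap ℂ B c) z := by
    intro c z
    exact hFuniq (algebraMap ℂ B c) (fun _ => algebraMap ℂ B c) (FinExpType.const _)
      (fun n => (iter_alg n c).symm) z
  have hFzero : ∀ z : ℂ, (0 : B) = Ffun 0 z := by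
    intro z
    exact hFuniq 0 (fun _ => (0:B)) (FinExpType.const 0)
      (fun n => by
        rw [show (⇑φ)^[n] (0:B) = (⇑φ)^[n] ((0:B) + 0) by rw [add_zero], iter_add]
        simp [← hFadd]) z
  have hFstar : ∀ (b : B) (z : ℂ), star (Ffun b (conj z)) = Ffun (star b) z := by
    intro b z
    exact hFuniq (star b) (fun w => star (Ffun b (conj w))) ((hFfin b).star_reflect)
      (fun n => hinterp_star b (Ffun b) (hFfin b) (hFval b) n) z
  have hFzeroval : ∀ b : B, Ffun b 0 = b := by
    intro b
    have := hFval b 0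
    simpa using this
  have hFI : ∀ b : B, Ffun b Complex.I = φ b := by
    intro b
    have := hFval b 1
    simpa using this
  have hFgroup : ∀ (b : B) (y z : ℂ), Ffun b (y + z) = Ffun (Ffun b z) y := by
    intro b y z
    exact hFuniq (Ffun b z) (fun w => Ffun b (w + z)) ((hFfin b).comp_add_const z)
      (fun n => by
        rw [add_comm ((n:ℂ) * Complex.I) z]
        exact (hinterp_shift b (Ffun b) (hFfin b) (hFval b) n z).symm) y
  -- assemble the algebra homomorphisms
  set βalg : ℂ → (B →ₐ[ℂ] B) := fun z =>
    { toFun := fun b => Ffun b z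
      map_one' := by
        have h := hFalg 1 z
        rw [map_one] at h
        exact h.symm
      map_mul' := fun a b => (hFmul a b z).symm
      map_zero' := (hFzero z).symm
      map_add' := fun a b => (hFadd a b z).symm
      commutes' := fun c => (hFalg c z).symm } with hβalg_def
  have hβalg_apply : ∀ (z : ℂ) (b : B), βalg z b = Ffun b z := fun _ _ => rfl
  have hβalg_comp : ∀ (y z : ℂ) (b : B), βalg y (βalg z b) = βalg (y + z) b := by
    intro y z b
    rw [hβalg_apply, hβalg_apply, hβalg_apply, hFgroup]
  have hβalg_zero : ∀ b : B, βalg 0 b = b := fun b => hFzeroval b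
  set β : ℂ → (B ≃ₐ[ℂ] B) := fun z =>
    AlgEquiv.ofAlgHom (βalg z) (βalg (-z))
      (AlgHom.ext fun b => by
        rw [AlgHom.comp_apply, hβalg_comp, add_neg_cancel, hβalg_zero, AlgHom.id_apply])
      (AlgHom.ext fun b => by
        rw [AlgHom.comp_apply, hβalg_comp, neg_add_cancel, hβalg_zero, AlgHom.id_apply])
    with hβ_def
  have hβ_apply : ∀ (z : ℂ) (b : B), β z b = Ffun b z := fun _ _ => rfl
  refine ⟨β, ⟨⟨⟨fun y z b => ?_, fun z b => ?_⟩, fun b => ?_⟩, fun b => ?_⟩, ?_⟩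
  · rw [hβ_apply, hβ_apply, hβ_apply, hFgroup]
  · rw [hβ_apply, hβ_apply, ← hFstar]
    congr 1
    rw [show (starRingEnd ℂ) ((starRingEnd ℂ) z) = z from Complex.conj_conj z]
  · have : (fun z => β z b) = Ffun b := by
      funext z
      exact hβ_apply z b
    rw [this]
    exact hFfin b
  · rw [hβ_apply, hFI]
  -- uniqueness
  · rintro β' ⟨⟨⟨hgrp', hstar'⟩, hfin'⟩, hI'⟩
    funext z
    refine AlgEquiv.ext fun b => ?_
    have hβ'0 : ∀ b : B, β' 0 b = b := by
      intro b
      have h1 := hgrp' 0 0 b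
      rw [add_zero] at h1
      exact ((β' 0).injective h1).symm
    have hval' : ∀ n : ℕ, ∀ b : B, β' ((n:ℂ) * Complex.I) b = (⇑φ)^[n] b := by
      intro n
      induction n with
      | zero => intro b; simpa using hβ'0 b
      | succ n ih =>
        intro b
        rw [show (((n+1:ℕ)):ℂ) * Complex.I = (n:ℂ) * Complex.I + Complex.I by push_cast; ring,
          hgrp', hI', ih (φ b), ← Function.iterate_succ_apply]
    have := interp_unique (hfin' b) (hFfin b)
      (fun n => by rw [hval' n b, hFval b n]) z
    rw [this, ← hβ_apply]
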